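/- Let N ≥ 1 and L ≥ 1 be integers and set n = 2^N. Let a : Fin n → ℝ satisfy Σ_i a_i = 0. Then for every b : Fin n → ℝ, (2^(N−1)/L)·Σ_i (a_i − b_i)² + (1/2)·Σ_i Σ_k (b_i − b_k)² ≥ (1/(2L+1))·(1/2)·Σ_i Σ_k (a_i − a_k)². -/

import Mathlib

/-- The minimization statement underlying `𝓔₁ = (2L+1)⁻¹ 𝓔₀` for the generalized Vicsek
set `V(N,L)`: every choice of central values `b` gives at least the renormalized energy. -/
theorem vicsek_energy_minimization (N L : ℕ) (hN : 1 ≤ N) (hL : 1 ≤ L)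
    (a : Fin (2 ^ N) → ℝ) (ha : ∑ i, a i = 0) (b : Fin (2 ^ N) → ℝ) :
    (1 / (2 * (L : ℝ) + 1)) * ((1 / 2) * ∑ i, ∑ k, (a i - a k) ^ 2) ≤
      ((2 : ℝ) ^ (N - 1) / (L : ℝ)) * ∑ i, (a i - b i) ^ 2 +
        (1 / 2) * ∑ i, ∑ k, (b i - b k) ^ 2 := by
  have hn : ((2 ^ N : ℕ) : ℝ) = 2 ^ N := by push_cast; ring
  have key : ∀ x : Fin (2 ^ N) → ℝ, ∑ i, ∑ k, (x i - x k) ^ 2 =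
      2 * ((2 ^ N : ℕ) : ℝ) * (∑ i, x i ^ 2) - 2 * (∑ i, x i) ^ 2 := by
    intro x
    have h : ∀ i k : Fin (2 ^ N), (x i - x k) ^ 2 = x i ^ 2 - 2 * (x i * x k) + x k ^ 2 := by
      intro i k; ring
    simp_rw [h, Finset.sum_add_distrib, Finset.sum_sub_distrib, Finset.sum_const,
      ← Finset.mul_sum, ← Finset.sum_mul, Finset.card_univ, Fintype.card_fin, nsmul_eq_mul]
    rw [← Finset.mul_sum]
    ring
  set A := ∑ i, a i ^ 2 with hA
  set B := ∑ i, b i ^ 2 with hB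
  set P := ∑ i, a i * b i with hP
  set S := ∑ i, b i with hS
  set c : Fin (2 ^ N) → ℝ := fun i => (2 * (L : ℝ) + 1) * b i - a i with hc
  have hc1 : ∑ i, c i = (2 * (L : ℝ) + 1) * S := by
    simp [hc, Finset.sum_sub_distrib, ← Finset.mul_sum, ha, hS]
  have hc2 : ∑ i, c i ^ 2 =
      (2 * (L : ℝ) + 1) ^ 2 * B - 2 * (2 * (L : ℝ) + 1) * P + A := by
    have h : ∀ i : Fin (2 ^ N), c i ^ 2 =
        (2 * (L : ℝ) + 1) ^ 2 * b i ^ 2 - 2 * (2 * (L : ℝ) + 1) * (a i * b i) + a i ^ 2 := by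
      intro i; simp only [hc]; ring
    simp_rw [h, Finset.sum_add_distrib, Finset.sum_sub_distrib, ← Finset.mul_sum]
    rfl
  have hCS : (∑ i, c i) ^ 2 ≤ ((2 ^ N : ℕ) : ℝ) * ∑ i, c i ^ 2 := by
    have := sq_sum_le_card_mul_sum_sq (s := (Finset.univ : Finset (Fin (2 ^ N)))) (f := c)
    simpa using this
  have hQ : (0 : ℝ) ≤ ∑ i, c i ^ 2 := by positivity
  have hab : ∑ i, (a i - b i) ^ 2 = A - 2 * P + B := by
    have h : ∀ i : Fin (2 ^ N), (a i - b i) ^ 2 = a i ^ 2 - 2 * (a i * b i) + b i ^ 2 := by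
      intro i; ring
    simp_rw [h, Finset.sum_add_distrib, Finset.sum_sub_distrib, ← Finset.mul_sum]
    rfl
  have ha2 : ∑ i, ∑ k, (a i - a k) ^ 2 = 2 * ((2 ^ N : ℕ) : ℝ) * A := by
    rw [key a, ha]; ring
  have hb2 : ∑ i, ∑ k, (b i - b k) ^ 2 = 2 * ((2 ^ N : ℕ) : ℝ) * B - 2 * S ^ 2 := key b
  rw [ha2, hb2, hab]
  rw [hc1, hc2] at hCS
  rw [hc2] at hQ
  have hpow : (2 : ℝ) ^ (N - 1) * 2 = ((2 ^ N : ℕ) : ℝ) := by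
    rw [hn, ← pow_succ, Nat.sub_add_cancel hN]
  have hL' : (1 : ℝ) ≤ L := by exact_mod_cast hL
  have hLpos : (0 : ℝ) < L := by linarith
  have hnpos : (0 : ℝ) < ((2 ^ N : ℕ) : ℝ) := by positivity
  set m : ℝ := ((2 ^ N : ℕ) : ℝ)
  set e : ℝ := (2 : ℝ) ^ (N - 1)
  set l : ℝ := (L : ℝ)
  have h2l1 : (0 : ℝ) < 2 * l + 1 := by linarith
  have he : e = m / 2 := by rw [← hpow]; ring
  rw [he]
  have hl0 : l ≠ 0 := ne_of_gt hLpos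
  have h2l10 : 2 * l + 1 ≠ 0 := ne_of_gt h2l1
  field_simp
  nlinarith [mul_nonneg (by linarith : (0:ℝ) ≤ 2 * l)
      (sub_nonneg.2 hCS), mul_nonneg hnpos.le hQ, hnpos, hLpos, sq_nonneg S]
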